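/- Let a, b ∈ ℝ and let I, J ⊆ ℝ be open intervals such that 1 + a·e^{2x} > 0 for all x ∈ I and 1 + b·e^{2y} > 0 for all y ∈ J. Let w : I × J → ℝ be differentiable with ∂w/∂x = w − √((1 + b·e^{2y})/(1 + a·e^{2x})) and ∂w/∂y = w − √((1 + a·e^{2x})/(1 + b·e^{2y})) at every (x,y) ∈ I × J. Then there exists a constant η ∈ ℝ such that w(x,y) = √((1 + a·e^{2x})(1 + b·e^{2y})) + η·e^{x+y} for all (x,y) ∈ I × J. -/

import Mathlib

private lemma const_on_of_hasDerivAt_zero {s : Set ℝ} (ho : IsOpen s) (hc : Convex ℝ s)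
    {f : ℝ → ℝ} (hf : ∀ x ∈ s, HasDerivAt f 0 x) :
    ∀ x ∈ s, ∀ y ∈ s, f x = f y := by
  intro x hxs y hys
  refine hc.is_const_of_fderivWithin_eq_zero
    (fun z hz => ((hf z hz).differentiableAt).differentiableWithinAt) ?_ hxs hys
  intro z hz
  rw [fderivWithin_of_isOpen ho hz, (hf z hz).hasFDerivAt.fderiv]
  ext
  simp

private lemma key_deriv (a B : ℝ) (hB : 0 ≤ B) (f : ℝ → ℝ) (x c : ℝ)
    (hA : 0 < 1 + a * Real.exp (2 * x))
    (hf : HasDerivAt f (f x - Real.sqrt (B / (1 + a * Real.exp (2 * x)))) x) :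
    HasDerivAt (fun t => (f t - Real.sqrt (1 + a * Real.exp (2 * t)) * Real.sqrt B)
      * Real.exp (-(t + c))) 0 x := by
  have h1 : HasDerivAt (fun t : ℝ => 2 * t) 2 x := by
    simpa using (hasDerivAt_id x).const_mul (2 : ℝ)
  have h2 : HasDerivAt (fun t : ℝ => Real.exp (2 * t)) (Real.exp (2 * x) * 2) x :=
    (Real.hasDerivAt_exp (2 * x)).comp x h1
  have h3 : HasDerivAt (fun t : ℝ => 1 + a * Real.exp (2 * t)) (a * (Real.exp (2 * x) * 2)) x :=
    (h2.const_mul a).const_add 1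
  have hg : HasDerivAt (fun t : ℝ => Real.sqrt (1 + a * Real.exp (2 * t)))
      (a * (Real.exp (2 * x) * 2) / (2 * Real.sqrt (1 + a * Real.exp (2 * x)))) x :=
    h3.sqrt (ne_of_gt hA)
  have he : HasDerivAt (fun t : ℝ => Real.exp (-(t + c))) (Real.exp (-(x + c)) * (-1)) x := by
    have : HasDerivAt (fun t : ℝ => -(t + c)) (-1) x := ((hasDerivAt_id x).add_const c).neg
    exact (Real.hasDerivAt_exp (-(x + c))).comp x this
  have hD := (hf.sub (hg.mul_const (Real.sqrt B))).mul he
  refine HasDerivAt.congr_deriv hD ?_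
  symm
  simp only [Pi.sub_apply]
  have hs : 0 < Real.sqrt (1 + a * Real.exp (2 * x)) := Real.sqrt_pos.mpr hA
  have hs2 : Real.sqrt (1 + a * Real.exp (2 * x)) * Real.sqrt (1 + a * Real.exp (2 * x))
      = 1 + a * Real.exp (2 * x) := Real.mul_self_sqrt hA.le
  rw [Real.sqrt_div hB]
  set E := Real.exp (2 * x) with hE
  set s := Real.sqrt (1 + a * E) with hsdef
  set u := Real.sqrt B with hu
  set e := Real.exp (-(x + c)) with he'
  field_simp
  linear_combination (-(u * e)) * hs2

/-- Solving the linear first-order system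
`∂w/∂x = w − √((1 + b e^{2y})/(1 + a e^{2x}))`, `∂w/∂y = w − √((1 + a e^{2x})/(1 + b e^{2y}))`
when both factors are positive:
`w(x,y) = √((1 + a e^{2x})(1 + b e^{2y})) + η e^{x+y}` for some constant `η`. -/
theorem linear_system_sqrt_pos (a b : ℝ) (I J : Set ℝ)
    (hIopen : IsOpen I) (hIconn : I.OrdConnected)
    (hJopen : IsOpen J) (hJconn : J.OrdConnected)
    (ha : ∀ x ∈ I, 0 < 1 + a * Real.exp (2 * x))
    (hb : ∀ y ∈ J, 0 < 1 + b * Real.exp (2 * y))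
    (w : ℝ × ℝ → ℝ)
    (hdiff : ∀ p ∈ I ×ˢ J, DifferentiableAt ℝ w p)
    (hx : ∀ x ∈ I, ∀ y ∈ J, deriv (fun t => w (t, y)) x =
      w (x, y) - Real.sqrt ((1 + b * Real.exp (2 * y)) / (1 + a * Real.exp (2 * x))))
    (hy : ∀ x ∈ I, ∀ y ∈ J, deriv (fun s => w (x, s)) y =
      w (x, y) - Real.sqrt ((1 + a * Real.exp (2 * x)) / (1 + b * Real.exp (2 * y)))) :
    ∃ η : ℝ, ∀ x ∈ I, ∀ y ∈ J,
      w (x, y) = Real.sqrt ((1 + a * Real.exp (2 * x)) * (1 + b * Real.exp (2 * y)))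
        + η * Real.exp (x + y) := by
  rcases I.eq_empty_or_nonempty with hI | ⟨x₀, hx₀⟩
  · exact ⟨0, by simp [hI]⟩
  rcases J.eq_empty_or_nonempty with hJ | ⟨y₀, hy₀⟩
  · exact ⟨0, by simp [hJ]⟩
  set F : ℝ → ℝ → ℝ := fun x y =>
    (w (x, y) - Real.sqrt (1 + a * Real.exp (2 * x)) * Real.sqrt (1 + b * Real.exp (2 * y)))
      * Real.exp (-(x + y)) with hF
  -- differentiability of sections
  have hdx : ∀ x ∈ I, ∀ y ∈ J, DifferentiableAt ℝ (fun t => w (t, y)) x := fun x hxI y hyJ =>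
    (hdiff (x, y) (Set.mk_mem_prod hxI hyJ)).comp x
      (differentiableAt_id.prodMk (differentiableAt_const y))
  have hdy : ∀ x ∈ I, ∀ y ∈ J, DifferentiableAt ℝ (fun s => w (x, s)) y := fun x hxI y hyJ =>
    (hdiff (x, y) (Set.mk_mem_prod hxI hyJ)).comp y
      ((differentiableAt_const x).prodMk differentiableAt_id)
  -- F is constant in x for fixed y
  have hFx : ∀ y ∈ J, ∀ x ∈ I, HasDerivAt (fun t => F t y) 0 x := by
    intro y hyJ x hxI
    have hf : HasDerivAt (fun t => w (t, y))
        (w (x, y) - Real.sqrt ((1 + b * Real.exp (2 * y)) / (1 + a * Real.exp (2 * x)))) x := by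
      have := (hdx x hxI y hyJ).hasDerivAt
      rwa [hx x hxI y hyJ] at this
    exact key_deriv a (1 + b * Real.exp (2 * y)) (hb y hyJ).le (fun t => w (t, y)) x y
      (ha x hxI) hf
  have hFy : ∀ x ∈ I, ∀ y ∈ J, HasDerivAt (fun s => F x s) 0 y := by
    intro x hxI y hyJ
    have hf : HasDerivAt (fun s => w (x, s))
        (w (x, y) - Real.sqrt ((1 + a * Real.exp (2 * x)) / (1 + b * Real.exp (2 * y)))) y := by
      have := (hdy x hxI y hyJ).hasDerivAt
      rwa [hy x hxI y hyJ] at this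
    have hk := key_deriv b (1 + a * Real.exp (2 * x)) (ha x hxI).le (fun s => w (x, s)) y x
      (hb y hyJ) hf
    have : (fun s => F x s) = fun s =>
        (w (x, s) - Real.sqrt (1 + b * Real.exp (2 * s)) * Real.sqrt (1 + a * Real.exp (2 * x)))
          * Real.exp (-(s + x)) := by
      funext s
      rw [hF]
      ring_nf
    rw [this]
    exact hk
  refine ⟨F x₀ y₀, fun x hxI y hyJ => ?_⟩
  have hconst : F x y = F x₀ y₀ := by
    have e1 : F x y = F x₀ y :=
      const_on_of_hasDerivAt_zero hIopen hIconn.convex (hFx y hyJ) x hxI x₀ hx₀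
    have e2 : F x₀ y = F x₀ y₀ :=
      const_on_of_hasDerivAt_zero hJopen hJconn.convex (hFy x₀ hx₀) y hyJ y₀ hy₀
    rw [e1, e2]
  have hsm : Real.sqrt ((1 + a * Real.exp (2 * x)) * (1 + b * Real.exp (2 * y)))
      = Real.sqrt (1 + a * Real.exp (2 * x)) * Real.sqrt (1 + b * Real.exp (2 * y)) :=
    Real.sqrt_mul (ha x hxI).le _
  rw [hsm]
  have h1 : F x y * Real.exp (x + y)
      = w (x, y) - Real.sqrt (1 + a * Real.exp (2 * x)) * Real.sqrt (1 + b * Real.exp (2 * y)) := by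
    show ((w (x, y) - _) * Real.exp (-(x + y))) * Real.exp (x + y) = _
    rw [mul_assoc, ← Real.exp_add, neg_add_cancel, Real.exp_zero, mul_one]
  rw [hconst] at h1
  linarith [h1]
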